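/- Let E be a real inner product space, γ > 1, and C : E → E a γ-approximate compressor (‖x − C(x)‖² ≤ (1/γ)‖x‖² for all x). For m workers indexed by i ∈ {1,…,m}, let (g_t^i)_{t≥0} be arbitrary vectors in E and define recursively e_0^i = 0, P_t^i = g_t^i + e_t^i, and e_{t+1}^i = P_t^i − C(P_t^i). Then for every ε ∈ (0,1) with γε > 1 and every T ≥ 1, Σ_{t=0}^{T−1} (1/m) Σ_{i=1}^m ‖e_t^i‖² ≤ (1/(γ(1−ε)))·(1 + 1/(γε−1))·Σ_{t=0}^{T−1} (1/m) Σ_{i=1}^m ‖g_t^i‖², and consequently Σ_{t=0}^{T−1} ‖(1/m) Σ_{i=1}^m e_t^i‖² is bounded by the same quantity. -/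

import Mathlib

/-- Bounded-error lemma for error feedback with a `γ`-approximate
compressor: the accumulated per-worker averaged squared errors are bounded by
`(1/(γ(1-ε)))(1 + 1/(γε-1))` times the averaged squared local updates, and the
same bound holds for the squared norm of the averaged error. -/
theorem stmt_2 {E : Type*} [NormedAddCommGroup E] [InnerProductSpace ℝ E]
    (γ : ℝ) (hγ : 1 < γ)
    (C : E → E) (hC : ∀ x : E, ‖x - C x‖ ^ 2 ≤ (1 / γ) * ‖x‖ ^ 2)
    (m : ℕ) (hm : 1 ≤ m)
    (g : ℕ → Fin m → E) (e : ℕ → Fin m → E)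
    (he0 : ∀ i, e 0 i = 0)
    (herec : ∀ t i, e (t + 1) i = (g t i + e t i) - C (g t i + e t i))
    (ε : ℝ) (hε0 : 0 < ε) (hε1 : ε < 1) (hγε : 1 < γ * ε)
    (T : ℕ) (hT : 1 ≤ T) :
    (∑ t ∈ Finset.range T, (1 / (m : ℝ)) * ∑ i, ‖e t i‖ ^ 2 ≤
        (1 / (γ * (1 - ε))) * (1 + 1 / (γ * ε - 1)) *
          ∑ t ∈ Finset.range T, (1 / (m : ℝ)) * ∑ i, ‖g t i‖ ^ 2) ∧
    (∑ t ∈ Finset.range T, ‖(1 / (m : ℝ)) • ∑ i, e t i‖ ^ 2 ≤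
        (1 / (γ * (1 - ε))) * (1 + 1 / (γ * ε - 1)) *
          ∑ t ∈ Finset.range T, (1 / (m : ℝ)) * ∑ i, ‖g t i‖ ^ 2) := by
  have hm0 : (0 : ℝ) < m := by exact_mod_cast hm
  have hγ0 : (0 : ℝ) < γ := by linarith
  have hβ : (0 : ℝ) < γ * ε - 1 := by linarith
  set c : ℝ := (1 / γ) * (1 + 1 / (γ * ε - 1)) with hc
  have hc0 : 0 ≤ c := by positivity
  set A : ℕ → ℝ := fun t => (1 / (m : ℝ)) * ∑ i, ‖e t i‖ ^ 2 with hA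
  set b : ℕ → ℝ := fun t => (1 / (m : ℝ)) * ∑ i, ‖g t i‖ ^ 2 with hb
  have hA0 : ∀ t, 0 ≤ A t := by
    intro t; apply mul_nonneg (by positivity)
    exact Finset.sum_nonneg fun i _ => by positivity
  have hb0 : ∀ t, 0 ≤ b t := by
    intro t; apply mul_nonneg (by positivity)
    exact Finset.sum_nonneg fun i _ => by positivity
  -- per-worker step
  have hstep : ∀ t i, ‖e (t + 1) i‖ ^ 2 ≤ ε * ‖e t i‖ ^ 2 + c * ‖g t i‖ ^ 2 := by
    intro t i
    have h1 : ‖e (t + 1) i‖ ^ 2 ≤ (1 / γ) * ‖g t i + e t i‖ ^ 2 := by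
      rw [herec t i]; exact hC _
    have h2 : ‖g t i + e t i‖ ≤ ‖g t i‖ + ‖e t i‖ := norm_add_le _ _
    have h3 : ‖g t i + e t i‖ ^ 2 ≤ (‖g t i‖ + ‖e t i‖) ^ 2 := by
      apply pow_le_pow_left₀ (norm_nonneg _) h2
    have h4 : (‖g t i‖ + ‖e t i‖) ^ 2 ≤
        (1 + 1 / (γ * ε - 1)) * ‖g t i‖ ^ 2 + (γ * ε) * ‖e t i‖ ^ 2 := by
      set x := ‖g t i‖; set y := ‖e t i‖
      have key : (γ * ε - 1) *
          ((1 + 1 / (γ * ε - 1)) * x ^ 2 + (γ * ε) * y ^ 2 - (x + y) ^ 2) =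
          (x - (γ * ε - 1) * y) ^ 2 := by
        field_simp
        ring
      nlinarith [sq_nonneg (x - (γ * ε - 1) * y), key, hβ]
    have h5 : (1 / γ) * ‖g t i + e t i‖ ^ 2 ≤
        (1 / γ) * ((1 + 1 / (γ * ε - 1)) * ‖g t i‖ ^ 2 + (γ * ε) * ‖e t i‖ ^ 2) := by
      apply mul_le_mul_of_nonneg_left (le_trans h3 h4) (by positivity)
    have h6 : (1 / γ) * ((1 + 1 / (γ * ε - 1)) * ‖g t i‖ ^ 2 + (γ * ε) * ‖e t i‖ ^ 2) =
        ε * ‖e t i‖ ^ 2 + c * ‖g t i‖ ^ 2 := by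
      rw [hc]
      field_simp [hγ0.ne', hβ.ne']
      ring
    linarith [h1, h5, h6.ge, h6.le]
  -- averaged step
  have hAstep : ∀ t, A (t + 1) ≤ ε * A t + c * b t := by
    intro t
    have : (∑ i, ‖e (t + 1) i‖ ^ 2) ≤ ε * (∑ i, ‖e t i‖ ^ 2) + c * (∑ i, ‖g t i‖ ^ 2) := by
      rw [Finset.mul_sum, Finset.mul_sum, ← Finset.sum_add_distrib]
      exact Finset.sum_le_sum fun i _ => hstep t i
    have h1m : 0 ≤ (1 / (m : ℝ)) := by positivity
    calc A (t + 1) = (1 / (m : ℝ)) * ∑ i, ‖e (t + 1) i‖ ^ 2 := rfl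
      _ ≤ (1 / (m : ℝ)) * (ε * (∑ i, ‖e t i‖ ^ 2) + c * (∑ i, ‖g t i‖ ^ 2)) :=
          mul_le_mul_of_nonneg_left this h1m
      _ = ε * A t + c * b t := by simp [hA, hb]; ring
  have hA00 : A 0 = 0 := by simp [hA, he0]
  -- sum bound: (1-ε) ∑ A ≤ c ∑ b
  have hsum : (1 - ε) * ∑ t ∈ Finset.range T, A t ≤ c * ∑ t ∈ Finset.range T, b t := by
    obtain ⟨S, rfl⟩ : ∃ S, T = S + 1 := ⟨T - 1, by omega⟩
    have h1 : ∑ t ∈ Finset.range (S + 1), A t ≤ ∑ t ∈ Finset.range (S + 1), A (t + 1) := by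
      calc ∑ t ∈ Finset.range (S + 1), A t
          = ∑ t ∈ Finset.range S, A (t + 1) := by
            rw [Finset.sum_range_succ', hA00, add_zero]
        _ ≤ ∑ t ∈ Finset.range S, A (t + 1) + A (S + 1) :=
            le_add_of_nonneg_right (hA0 _)
        _ = ∑ t ∈ Finset.range (S + 1), A (t + 1) := (Finset.sum_range_succ _ _).symm
    have h2 : ∑ t ∈ Finset.range (S + 1), A (t + 1) ≤
        ε * ∑ t ∈ Finset.range (S + 1), A t + c * ∑ t ∈ Finset.range (S + 1), b t := by
      rw [Finset.mul_sum, Finset.mul_sum, ← Finset.sum_add_distrib]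
      exact Finset.sum_le_sum fun t _ => hAstep t
    nlinarith [h1, h2]
  have hconst : (1 / (γ * (1 - ε))) * (1 + 1 / (γ * ε - 1)) = c / (1 - ε) := by
    have h1ε : (0:ℝ) < 1 - ε := by linarith
    rw [hc]
    field_simp [hγ0.ne', hβ.ne', h1ε.ne']
  have hfirst : ∑ t ∈ Finset.range T, A t ≤
      (1 / (γ * (1 - ε))) * (1 + 1 / (γ * ε - 1)) * ∑ t ∈ Finset.range T, b t := by
    rw [hconst]
    rw [div_mul_eq_mul_div, le_div_iff₀ (by linarith : (0:ℝ) < 1 - ε)]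
    linarith [hsum]
  refine ⟨hfirst, le_trans ?_ hfirst⟩
  apply Finset.sum_le_sum
  intro t _
  have hJ : ‖(1 / (m : ℝ)) • ∑ i, e t i‖ ^ 2 ≤ A t := by
    rw [norm_smul]
    have h1 : ‖∑ i, e t i‖ ≤ ∑ i, ‖e t i‖ := norm_sum_le _ _
    have h2 : (∑ i, ‖e t i‖) ^ 2 ≤ (m : ℝ) * ∑ i, ‖e t i‖ ^ 2 := by
      have := sq_sum_le_card_mul_sum_sq (s := (Finset.univ : Finset (Fin m)))
        (f := fun i => ‖e t i‖)
      simpa using this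
    have h3 : ‖∑ i, e t i‖ ^ 2 ≤ (m : ℝ) * ∑ i, ‖e t i‖ ^ 2 :=
      le_trans (pow_le_pow_left₀ (norm_nonneg _) h1 2) h2
    have h4 : ‖(1 / (m : ℝ))‖ = 1 / (m : ℝ) := by
      rw [Real.norm_eq_abs, abs_of_pos (by positivity)]
    rw [h4, mul_pow]
    have : (1 / (m : ℝ)) ^ 2 * ‖∑ i, e t i‖ ^ 2 ≤
        (1 / (m : ℝ)) ^ 2 * ((m : ℝ) * ∑ i, ‖e t i‖ ^ 2) :=
      mul_le_mul_of_nonneg_left h3 (by positivity)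
    calc (1 / (m : ℝ)) ^ 2 * ‖∑ i, e t i‖ ^ 2
        ≤ (1 / (m : ℝ)) ^ 2 * ((m : ℝ) * ∑ i, ‖e t i‖ ^ 2) := this
      _ = A t := by rw [hA]; field_simp
  exact hJ
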